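/- Define W_k(ξ) = (1/2πi) ∫_{(c)} ((2π)^{-s} Γ(s + k/2)/Γ(k/2)) ξ^{-s} ds/s for c > 0 and ξ > 0. Then |W_k(ξ)| ≤ (k/(πξ))^k for all ξ > 0, and in particular |W_k(ξ)| ≤ (k/ξ) π^{-(k-1)} for ξ ≥ k. -/

import Mathlib

open Complex
open MeasureTheory Set

/-- The weight `W_k(ξ) = (1/2πi) ∫_{(c)} ((2π)^{-s} Γ(s+k/2)/Γ(k/2)) ξ^{-s} ds/s`,
written as an integral over the vertical line `Re s = c` parametrized by `s = c + it`. -/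
noncomputable def heckeWeight (k : ℕ) (c : ℝ) (ξ : ℝ) : ℂ :=
  (1 / (2 * Real.pi)) * ∫ t : ℝ,
    ((2 * Real.pi : ℂ) ^ (-(c + t * I)) * Complex.Gamma ((c + t * I) + k / 2) /
        Complex.Gamma ((k : ℂ) / 2)) * (ξ : ℂ) ^ (-(c + t * I)) / (c + t * I)


-- L1
theorem my_norm_Gamma_le {s : ℂ} (hs : 0 < s.re) : ‖Complex.Gamma s‖ ≤ Real.Gamma s.re := by
  rw [Complex.Gamma_eq_integral hs, Real.Gamma_eq_integral hs, Complex.GammaIntegral]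
  refine (norm_integral_le_integral_norm _).trans ?_
  refine le_of_eq (setIntegral_congr_fun measurableSet_Ioi fun x hx => ?_)
  rw [norm_mul, Complex.norm_cpow_eq_rpow_re_of_pos hx, Complex.norm_real, Real.norm_eq_abs,
    abs_of_pos (Real.exp_pos _)]
  simp

-- L2
theorem my_Gamma_ratio (x : ℝ) (hx : 0 < x) (n : ℕ) :
    Real.Gamma (x + n) ≤ Real.Gamma x * (x + n) ^ n := by
  induction n with
  | zero => simp
  | succ n ih =>
      have hxn : (0:ℝ) < x + n := by positivity
      have h1 : Real.Gamma (x + (n+1:ℕ)) = (x + n) * Real.Gamma (x + n) := by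
        push_cast
        rw [show x + (n + 1 : ℝ) = (x + n) + 1 by ring, Real.Gamma_add_one hxn.ne']
      rw [h1]
      calc (x + n) * Real.Gamma (x + n) ≤ (x + n) * (Real.Gamma x * (x + n) ^ n) := by
            exact mul_le_mul_of_nonneg_left ih hxn.le
        _ ≤ (x + (n+1:ℕ)) * (Real.Gamma x * (x + (n+1:ℕ)) ^ n) := by
            have h2 : (x + n) ≤ x + (n+1:ℕ) := by push_cast; linarith
            have := Real.Gamma_pos_of_pos hx
            gcongr
        _ = Real.Gamma x * (x + (n+1:ℕ)) ^ (n+1) := by ring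



theorem my_Gamma_decay {w : ℂ} (hw : 0 < w.re) :
    ‖Complex.Gamma w‖ * ‖w‖ ^ 2 ≤ Real.Gamma (w.re + 2) := by
  have hw0 : w ≠ 0 := fun h => by rw [h] at hw; simp at hw
  have hw1 : w + 1 ≠ 0 := fun h => by
    have : (w + 1).re = 0 := by rw [h]; simp
    simp only [add_re, one_re] at this; linarith
  have h2 : Complex.Gamma (w + 2) = (w + 1) * (w * Complex.Gamma w) := by
    rw [show w + 2 = (w + 1) + 1 by ring, Complex.Gamma_add_one _ hw1,
      Complex.Gamma_add_one _ hw0]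
  have habs : ‖w‖ ≤ ‖w + 1‖ := by
    have : ‖w‖ ^ 2 ≤ ‖w + 1‖ ^ 2 := by
      rw [Complex.sq_norm, Complex.sq_norm]
      simp only [normSq_apply, add_re, add_im, one_re, one_im]
      nlinarith
    exact (pow_le_pow_iff_left₀ (norm_nonneg _) (norm_nonneg _) two_ne_zero).mp this
  have key : ‖Complex.Gamma (w + 2)‖ = ‖w+1‖ * (‖w‖ * ‖Complex.Gamma w‖) := by
    rw [h2]; simp [map_mul]
  have hle : ‖Complex.Gamma (w + 2)‖ ≤ Real.Gamma (w.re + 2) := by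
    have := my_norm_Gamma_le (s := w + 2) (by simp; linarith)
    simpa using this
  calc ‖Complex.Gamma w‖ * ‖w‖ ^ 2
      = ‖w‖ * (‖w‖ * ‖Complex.Gamma w‖) := by ring
    _ ≤ ‖w+1‖ * (‖w‖ * ‖Complex.Gamma w‖) := by
        apply mul_le_mul_of_nonneg_right habs; positivity
    _ = ‖Complex.Gamma (w + 2)‖ := key.symm
    _ ≤ Real.Gamma (w.re + 2) := hle


noncomputable def hG (a : ℝ) (u : ℝ) : ℝ := Real.exp (-u) * u ^ (a - 1)

theorem hG_integrableOn (a : ℝ) (ha : 0 < a) {y : ℝ} (hy : 0 ≤ y) :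
    IntegrableOn (hG a) (Ioi y) :=
  (Real.GammaIntegral_convergent ha).mono_set (Ioi_subset_Ioi hy)

theorem hG_nonneg (a : ℝ) {u : ℝ} (hu : 0 ≤ u) : 0 ≤ hG a u := by
  unfold hG; positivity

theorem hG_continuous (a : ℝ) (ha : 1 ≤ a) : Continuous (hG a) := by
  rw [continuous_iff_continuousAt]
  intro x
  exact (Real.continuous_exp.comp continuous_neg).continuousAt.mul
    (Real.continuousAt_rpow_const x (a - 1) (Or.inr (by linarith)))

theorem g_nonneg (a : ℝ) {y : ℝ} (hy : 0 ≤ y) : 0 ≤ ∫ u in Ioi y, hG a u :=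
  setIntegral_nonneg measurableSet_Ioi fun u hu => hG_nonneg a (hy.trans (le_of_lt hu))

-- tail bound
theorem tail_bound (a : ℝ) (ha : 0 < a) {y : ℝ} (hy : 0 < y) {p : ℝ} (hp : 0 ≤ p) :
    (∫ u in Ioi y, hG a u) ≤ y ^ (-p) * Real.Gamma (a + p) := by
  have hyp : (0:ℝ) < y ^ p := Real.rpow_pos_of_pos hy p
  have key : y ^ p * ∫ u in Ioi y, hG a u ≤ Real.Gamma (a + p) := by
    rw [← integral_const_mul]
    have h1 : ∫ u in Ioi y, y ^ p * hG a u ≤ ∫ u in Ioi y, hG (a + p) u := by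
      refine setIntegral_mono_on ((hG_integrableOn a ha hy.le).const_mul _)
        (hG_integrableOn (a + p) (by linarith) hy.le) measurableSet_Ioi fun u hu => ?_
      have hu0 : 0 < u := hy.trans hu
      have : y ^ p ≤ u ^ p := Real.rpow_le_rpow hy.le (le_of_lt hu) hp
      calc y ^ p * hG a u ≤ u ^ p * hG a u := by
            exact mul_le_mul_of_nonneg_right this (hG_nonneg a hu0.le)
        _ = hG (a + p) u := by
            unfold hG
            rw [← mul_assoc, mul_comm (u ^ p), mul_assoc, ← Real.rpow_add hu0]
            ring_nf
    have h2 : ∫ u in Ioi y, hG (a + p) u ≤ ∫ u in Ioi 0, hG (a + p) u := by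
      refine setIntegral_mono_set (hG_integrableOn (a + p) (by linarith) le_rfl) ?_
        (HasSubset.Subset.eventuallyLE (Ioi_subset_Ioi hy.le))
      exact (ae_restrict_iff' measurableSet_Ioi).mpr (ae_of_all _ fun u hu => hG_nonneg _ hu.le)
    have h3 : ∫ u in Ioi 0, hG (a + p) u = Real.Gamma (a + p) :=
      (Real.Gamma_eq_integral (by linarith)).symm
    linarith
  rw [Real.rpow_neg hy.le]
  rw [← mul_le_mul_iff_right₀ hyp]
  calc y ^ p * ∫ u in Ioi y, hG a u ≤ Real.Gamma (a + p) := key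
    _ = y ^ p * ((y ^ p)⁻¹ * Real.Gamma (a + p)) := by field_simp

-- splitting + continuity
theorem g_continuousAt (a : ℝ) (ha : 1 ≤ a) {ξ : ℝ} (hξ : 0 < ξ) :
    ContinuousAt (fun x => ∫ u in Ioi (2 * Real.pi * x), hG a u) ξ := by
  have ha0 : (0:ℝ) < a := by linarith
  have hcont : Continuous fun x : ℝ =>
      (∫ u in Ioi (0:ℝ), hG a u) - ∫ u in (0:ℝ)..(2 * Real.pi * x), hG a u := by
    refine continuous_const.sub ?_
    exact (intervalIntegral.continuous_primitive
      (fun c d => (hG_continuous a ha).intervalIntegrable c d) 0).comp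
      (continuous_const.mul continuous_id)
  refine hcont.continuousAt.congr ?_
  filter_upwards [eventually_gt_nhds hξ] with x hx
  have hb : (0:ℝ) < 2 * Real.pi * x := by positivity
  have hsplit : ∫ u in Ioi (0:ℝ), hG a u
      = (∫ u in Ioc (0:ℝ) (2 * Real.pi * x), hG a u) + ∫ u in Ioi (2 * Real.pi * x), hG a u := by
    rw [← setIntegral_union (Ioc_disjoint_Ioi le_rfl) measurableSet_Ioi
      ((hG_integrableOn a ha0 le_rfl).mono_set Ioc_subset_Ioi_self)
      (hG_integrableOn a ha0 hb.le), Ioc_union_Ioi_eq_Ioi hb.le]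
  rw [intervalIntegral.integral_of_le hb.le]
  linarith



theorem gmul_integrableOn (a : ℝ) (ha : 1 ≤ a) {σ : ℝ} (hσ : 0 < σ) :
    IntegrableOn (fun x => x ^ (σ - 1) * ∫ u in Ioi (2 * Real.pi * x), hG a u) (Ioi 0) := by
  have ha0 : (0:ℝ) < a := by linarith
  have hcont : ContinuousOn (fun x => x ^ (σ - 1) * ∫ u in Ioi (2 * Real.pi * x), hG a u)
      (Ioi (0:ℝ)) := fun x hx =>
    ((Real.continuousAt_rpow_const x _ (Or.inl (ne_of_gt hx))).mul
      (g_continuousAt a ha hx)).continuousWithinAt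
  rw [show Ioi (0:ℝ) = Ioc 0 1 ∪ Ioi 1 from (Ioc_union_Ioi_eq_Ioi zero_le_one).symm]
  refine IntegrableOn.union ?_ ?_
  · refine Integrable.mono' (g := fun x => Real.Gamma a * x ^ (σ - 1)) ?_ ?_ ?_
    · refine Integrable.const_mul ?_ _
      rw [show Integrable (fun x : ℝ => x ^ (σ - 1)) (volume.restrict (Ioc (0:ℝ) 1)) ↔
        IntegrableOn (fun x : ℝ => x ^ (σ - 1)) (Ioc (0:ℝ) 1) volume from Iff.rfl,
        ← intervalIntegrable_iff_integrableOn_Ioc_of_le zero_le_one]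
      exact intervalIntegral.intervalIntegrable_rpow' (by linarith)
    · exact (hcont.mono Ioc_subset_Ioi_self).aestronglyMeasurable measurableSet_Ioc
    · refine (ae_restrict_iff' measurableSet_Ioc).mpr (ae_of_all _ fun x hx => ?_)
      have hx0 : (0:ℝ) < x := hx.1
      have hg0 : 0 ≤ ∫ u in Ioi (2 * Real.pi * x), hG a u := g_nonneg a (by positivity)
      have h1 : (∫ u in Ioi (2 * Real.pi * x), hG a u) ≤ Real.Gamma a := by
        have := tail_bound a ha0 (y := 2 * Real.pi * x) (by positivity) (p := 0) le_rfl
        simpa using this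
      rw [Real.norm_eq_abs, _root_.abs_of_nonneg (mul_nonneg (Real.rpow_nonneg hx0.le _) hg0)]
      show x ^ (σ - 1) * _ ≤ Real.Gamma a * x ^ (σ - 1)
      rw [mul_comm (Real.Gamma a)]
      exact mul_le_mul_of_nonneg_left h1 (Real.rpow_nonneg hx0.le _)
  · set n : ℕ := ⌊σ⌋₊ + 1 with hn
    have hσn : σ < (n:ℝ) := by rw [hn]; push_cast; exact Nat.lt_floor_add_one σ
    refine Integrable.mono'
      (g := fun x => ((2 * Real.pi) ^ (-(n:ℝ)) * Real.Gamma (a + n)) * x ^ (σ - 1 - n)) ?_ ?_ ?_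
    · exact (integrableOn_Ioi_rpow_of_lt (by linarith) one_pos).const_mul _
    · exact (hcont.mono (Ioi_subset_Ioi zero_le_one)).aestronglyMeasurable measurableSet_Ioi
    · refine (ae_restrict_iff' measurableSet_Ioi).mpr (ae_of_all _ fun x hx => ?_)
      have hx0 : (0:ℝ) < x := lt_trans one_pos hx
      have hg0 : 0 ≤ ∫ u in Ioi (2 * Real.pi * x), hG a u := g_nonneg a (by positivity)
      have h1 : (∫ u in Ioi (2 * Real.pi * x), hG a u)
          ≤ (2 * Real.pi * x) ^ (-(n:ℝ)) * Real.Gamma (a + n) :=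
        tail_bound a ha0 (by positivity) (by positivity)
      have h2 : (2 * Real.pi * x) ^ (-(n:ℝ)) = (2 * Real.pi) ^ (-(n:ℝ)) * x ^ (-(n:ℝ)) :=
        Real.mul_rpow (by positivity) hx0.le
      rw [Real.norm_eq_abs, _root_.abs_of_nonneg (mul_nonneg (Real.rpow_nonneg hx0.le _) hg0)]
      calc x ^ (σ - 1) * ∫ u in Ioi (2 * Real.pi * x), hG a u
          ≤ x ^ (σ - 1) * ((2 * Real.pi * x) ^ (-(n:ℝ)) * Real.Gamma (a + n)) :=
            mul_le_mul_of_nonneg_left h1 (Real.rpow_nonneg hx0.le _)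
        _ = ((2 * Real.pi) ^ (-(n:ℝ)) * Real.Gamma (a + n)) * (x ^ (σ - 1) * x ^ (-(n:ℝ))) := by
            rw [h2]; ring
        _ = ((2 * Real.pi) ^ (-(n:ℝ)) * Real.Gamma (a + n)) * x ^ (σ - 1 - n) := by
            rw [← Real.rpow_add hx0]; ring_nf


theorem my_integral_ofReal {μ : Measure ℝ} {f : ℝ → ℝ} :
    ∫ x, ((f x : ℝ) : ℂ) ∂μ = ((∫ x, f x ∂μ : ℝ) : ℂ) := integral_ofReal

theorem core_fubini (a : ℝ) (ha : 1 ≤ a) {s : ℂ} (hs : 0 < s.re) :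
    (∫ x in Ioi (0:ℝ), (x:ℂ) ^ (s - 1) * ((∫ u in Ioi (2 * Real.pi * x), hG a u : ℝ) : ℂ))
      = ((2 * Real.pi : ℝ) : ℂ) ^ (-s) * Complex.Gamma (s + a) / s := by
  have ha0 : (0:ℝ) < a := by linarith
  have hs0 : s ≠ 0 := fun h => by rw [h] at hs; simp at hs
  set Ψ : ℝ → ℝ → ℂ := fun x u =>
    Set.indicator (Ioi (2 * Real.pi * x)) (fun u => (x:ℂ) ^ (s - 1) * ((hG a u : ℝ) : ℂ)) u
    with hΨ
  -- step 0: rewrite integrand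
  have hstep0 : ∀ x ∈ Ioi (0:ℝ),
      (x:ℂ) ^ (s - 1) * ((∫ u in Ioi (2 * Real.pi * x), hG a u : ℝ) : ℂ)
        = ∫ u in Ioi (0:ℝ), Ψ x u := by
    intro x hx
    have hx' : (0:ℝ) < x := hx
    rw [hΨ]
    simp only
    rw [integral_indicator measurableSet_Ioi, Measure.restrict_restrict measurableSet_Ioi,
      Ioi_inter_Ioi, max_eq_left (by positivity : (0:ℝ) ≤ 2 * Real.pi * x),
      integral_const_mul, my_integral_ofReal]
  rw [setIntegral_congr_fun measurableSet_Ioi hstep0]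
  -- measurability
  have hSmeas : MeasurableSet {p : ℝ × ℝ | 2 * Real.pi * p.1 < p.2} :=
    (isOpen_lt (by fun_prop) continuous_snd).measurableSet
  have hueq : Function.uncurry Ψ = Set.indicator {p : ℝ × ℝ | 2 * Real.pi * p.1 < p.2}
      (fun p => (p.1:ℂ) ^ (s - 1) * ((hG a p.2 : ℝ) : ℂ)) := by
    funext p
    simp only [Function.uncurry, hΨ, Set.indicator_apply, mem_Ioi, mem_setOf_eq]
  have hFsm : AEStronglyMeasurable (fun p : ℝ × ℝ => (p.1:ℂ) ^ (s - 1) * ((hG a p.2 : ℝ) : ℂ))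
      ((volume.restrict (Ioi (0:ℝ))).prod (volume.restrict (Ioi (0:ℝ)))) := by
    have hFc : ContinuousOn (fun p : ℝ × ℝ => (p.1:ℂ) ^ (s - 1) * ((hG a p.2 : ℝ) : ℂ))
        ((Ioi (0:ℝ)) ×ˢ (univ : Set ℝ)) := by
      intro p hp
      have h1 : ContinuousAt (fun p : ℝ × ℝ => ((p.1:ℝ):ℂ) ^ (s - 1)) p :=
        (Complex.continuousAt_ofReal_cpow_const p.1 (s-1)
          (Or.inr (ne_of_gt hp.1))).comp continuous_fst.continuousAt
      have h2 : ContinuousAt (fun p : ℝ × ℝ => ((hG a p.2 : ℝ) : ℂ)) p :=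
        (Complex.continuous_ofReal.comp ((hG_continuous a ha).comp continuous_snd)).continuousAt
      exact (h1.mul h2).continuousWithinAt
    have h0 := (hFc.mono (Set.prod_mono (subset_rfl (a := Ioi (0:ℝ)))
        (subset_univ (Ioi (0:ℝ))))).aestronglyMeasurable
      (μ := (volume : Measure ℝ).prod volume)
      ((measurableSet_Ioi (a := (0:ℝ))).prod (measurableSet_Ioi (a := (0:ℝ))))
    rw [Measure.prod_restrict]
    exact h0
  have hSM : AEStronglyMeasurable (Function.uncurry Ψ)
      ((volume.restrict (Ioi (0:ℝ))).prod (volume.restrict (Ioi (0:ℝ)))) := by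
    rw [hueq]; exact hFsm.indicator hSmeas
  -- integrability on the product
  have hInt : Integrable (Function.uncurry Ψ)
      ((volume.restrict (Ioi (0:ℝ))).prod (volume.restrict (Ioi (0:ℝ)))) := by
    refine (integrable_prod_iff hSM).mpr ⟨?_, ?_⟩
    · filter_upwards [ae_restrict_mem measurableSet_Ioi] with x hx
      have hx' : (0:ℝ) < x := hx
      have hbase : IntegrableOn (fun u => (x:ℂ) ^ (s - 1) * ((hG a u : ℝ) : ℂ))
          (Ioi (2 * Real.pi * x)) :=
        ((hG_integrableOn a ha0 (by positivity)).ofReal.const_mul _)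
      show Integrable (fun u => Ψ x u) (volume.restrict (Ioi (0:ℝ)))
      rw [hΨ]
      simp only
      rw [integrable_indicator_iff measurableSet_Ioi, IntegrableOn,
        Measure.restrict_restrict measurableSet_Ioi, Ioi_inter_Ioi,
        max_eq_left (by positivity : (0:ℝ) ≤ 2 * Real.pi * x)]
      exact hbase
    · refine ((gmul_integrableOn a ha hs).congr ?_)
      filter_upwards [ae_restrict_mem measurableSet_Ioi] with x hx
      have hx' : (0:ℝ) < x := hx
      have hnorm : ∀ u : ℝ, ‖Ψ x u‖
          = Set.indicator (Ioi (2 * Real.pi * x)) (fun u => x ^ (s.re - 1) * hG a u) u := by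
        intro u
        rw [hΨ]
        simp only
        rw [norm_indicator_eq_indicator_norm]
        rcases le_or_gt u (2 * Real.pi * x) with h | h
        · rw [Set.indicator_of_notMem (by simpa using h), Set.indicator_of_notMem (by simpa using h)]
        · have hu0 : (0:ℝ) < u := lt_trans (by positivity) h
          rw [Set.indicator_of_mem (by simpa using h), Set.indicator_of_mem (by simpa using h)]
          rw [norm_mul, Complex.norm_cpow_eq_rpow_re_of_pos hx', Complex.norm_real, Real.norm_eq_abs,
            _root_.abs_of_nonneg (hG_nonneg a hu0.le)]
          simp [Complex.sub_re, Complex.one_re]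
      show (fun x' => x' ^ (s.re - 1) * ∫ u in Ioi (2 * Real.pi * x'), hG a u) x
          = ∫ u in Ioi (0:ℝ), ‖Ψ x u‖
      simp only
      simp_rw [hnorm]
      rw [integral_indicator measurableSet_Ioi, Measure.restrict_restrict measurableSet_Ioi,
        Ioi_inter_Ioi, max_eq_left (by positivity : (0:ℝ) ≤ 2 * Real.pi * x),
        integral_const_mul]
  -- swap
  rw [integral_integral_swap hInt]
  -- inner evaluation
  have hstep3 : ∀ u ∈ Ioi (0:ℝ), (∫ x in Ioi (0:ℝ), Ψ x u)
      = (((2 * Real.pi : ℝ) : ℂ) ^ (-s) / s) * (((Real.exp (-u) : ℝ) : ℂ) * (u:ℂ) ^ (s + (a:ℂ) - 1)) := by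
    intro u hu
    have hu' : (0:ℝ) < u := hu
    set b : ℝ := u / (2 * Real.pi) with hb
    have hb' : (0:ℝ) < b := by rw [hb]; positivity
    have hcond : ∀ x : ℝ, Ψ x u
        = Set.indicator (Iio b) (fun x : ℝ => (x:ℂ) ^ (s - 1) * ((hG a u : ℝ) : ℂ)) x := by
      intro x
      rw [hΨ]
      simp only [Set.indicator_apply, mem_Ioi, mem_Iio]
      congr 1
      rw [eq_iff_iff, hb, lt_div_iff₀ (by positivity : (0:ℝ) < 2 * Real.pi), mul_comm x]
    simp_rw [hcond]
    rw [integral_indicator measurableSet_Iio, Measure.restrict_restrict measurableSet_Iio,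
      Iio_inter_Ioi, integral_mul_const]
    have hioo : (∫ x in Ioo (0:ℝ) b, (x:ℂ) ^ (s - 1)) = (b:ℂ) ^ s / s := by
      rw [← integral_Ioc_eq_integral_Ioo, ← intervalIntegral.integral_of_le hb'.le,
        integral_cpow (Or.inl (by simp only [Complex.sub_re, Complex.one_re]; linarith))]
      rw [sub_add_cancel, Complex.ofReal_zero, Complex.zero_cpow hs0, sub_zero]
    rw [hioo]
    have hbs : (b:ℂ) ^ s = (u:ℂ) ^ s * ((2 * Real.pi : ℝ) : ℂ) ^ (-s) := by
      rw [hb, div_eq_mul_inv, Complex.ofReal_mul,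
        mul_cpow_ofReal_nonneg hu'.le (by positivity), Complex.ofReal_inv,
        Complex.inv_cpow _ _ (by
          rw [Complex.arg_ofReal_of_nonneg (by positivity)]
          exact (Real.pi_ne_zero).symm), ← Complex.cpow_neg]
    have hGu : ((hG a u : ℝ) : ℂ) * (u:ℂ) ^ s
        = ((Real.exp (-u) : ℝ) : ℂ) * (u:ℂ) ^ (s + (a:ℂ) - 1) := by
      unfold hG
      rw [Complex.ofReal_mul, Complex.ofReal_cpow hu'.le]
      rw [mul_assoc, ← Complex.cpow_add _ _ (Complex.ofReal_ne_zero.mpr hu'.ne'),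
        show ((a - 1 : ℝ) : ℂ) + s = s + (a:ℂ) - 1 by push_cast; ring]
    calc (b:ℂ)^s / s * ((hG a u : ℝ) : ℂ) = ((hG a u : ℝ) : ℂ) * (u:ℂ)^s
          * (((2 * Real.pi : ℝ) : ℂ) ^ (-s) / s) := by rw [hbs]; ring
      _ = (((2 * Real.pi : ℝ) : ℂ) ^ (-s) / s)
          * (((Real.exp (-u) : ℝ) : ℂ) * (u:ℂ) ^ (s + (a:ℂ) - 1)) := by rw [hGu]; ring
  rw [setIntegral_congr_fun measurableSet_Ioi hstep3, integral_const_mul]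
  have hGam : Complex.Gamma (s + (a:ℂ)) =
      ∫ u in Ioi (0:ℝ), ((Real.exp (-u) : ℝ) : ℂ) * (u:ℂ) ^ (s + (a:ℂ) - 1) := by
    rw [Complex.Gamma_eq_integral (by simp only [Complex.add_re, Complex.ofReal_re]; linarith)]
    rfl
  rw [← hGam]
  ring



noncomputable def hf (a : ℝ) (x : ℝ) : ℂ :=
  (((Real.Gamma a)⁻¹ * ∫ u in Ioi (2 * Real.pi * x), hG a u : ℝ) : ℂ)

theorem mellin_hf (a : ℝ) (ha : 1 ≤ a) {s : ℂ} (hs : 0 < s.re) :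
    mellin (hf a) s = ((Real.Gamma a : ℝ) : ℂ)⁻¹
      * (((2 * Real.pi : ℝ) : ℂ) ^ (-s) * Complex.Gamma (s + a) / s) := by
  rw [mellin, ← core_fubini a ha hs, ← integral_const_mul]
  refine setIntegral_congr_fun measurableSet_Ioi fun x hx => ?_
  unfold hf
  push_cast
  rw [smul_eq_mul]
  ring

theorem hf_mellinConvergent (a : ℝ) (ha : 1 ≤ a) {c : ℝ} (hc : 0 < c) :
    MellinConvergent (hf a) (c : ℂ) := by
  have ha0 : (0:ℝ) < a := by linarith
  refine Integrable.mono'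
    (g := fun x => (Real.Gamma a)⁻¹ * (x ^ (c - 1) * ∫ u in Ioi (2 * Real.pi * x), hG a u))
    (((gmul_integrableOn a ha hc)).const_mul _) ?_ ?_
  · have hco : ContinuousOn (fun x : ℝ => (x:ℂ) ^ ((c:ℂ) - 1) • hf a x) (Ioi (0:ℝ)) := by
      intro x hx
      have hx' : (0:ℝ) < x := hx
      have h1 : ContinuousAt (fun x : ℝ => (x:ℂ) ^ ((c:ℂ) - 1)) x :=
        Complex.continuousAt_ofReal_cpow_const x _ (Or.inr hx'.ne')
      have h2 : ContinuousAt (hf a) x := by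
        unfold hf
        exact Complex.continuous_ofReal.continuousAt.comp
          ((continuousAt_const.mul (g_continuousAt a ha hx')))
      exact (h1.smul h2).continuousWithinAt
    exact hco.aestronglyMeasurable measurableSet_Ioi
  · refine (ae_restrict_iff' measurableSet_Ioi).mpr (ae_of_all _ fun x hx => ?_)
    have hx' : (0:ℝ) < x := hx
    have hg0 : 0 ≤ ∫ u in Ioi (2 * Real.pi * x), hG a u := g_nonneg a (by positivity)
    have hΓ : 0 < Real.Gamma a := Real.Gamma_pos_of_pos ha0
    have hre : ((c:ℂ) - 1).re = c - 1 := by simp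
    rw [norm_smul, Complex.norm_cpow_eq_rpow_re_of_pos hx', hre]
    unfold hf
    rw [Complex.norm_real, Real.norm_eq_abs, _root_.abs_of_nonneg (by positivity)]
    calc x ^ (c - 1) * ((Real.Gamma a)⁻¹ * ∫ u in Ioi (2 * Real.pi * x), hG a u)
        = (Real.Gamma a)⁻¹ * (x ^ (c - 1) * ∫ u in Ioi (2 * Real.pi * x), hG a u) := by ring
      _ ≤ _ := le_rfl

theorem hf_verticalIntegrable (a : ℝ) (ha : 1 ≤ a) {c : ℝ} (hc : 0 < c) :
    VerticalIntegrable (mellin (hf a)) c := by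
  have ha0 : (0:ℝ) < a := by linarith
  have hre : ∀ t : ℝ, ((c:ℂ) + t * I).re = c := by intro t; simp
  have hreim : ∀ t : ℝ, ((c:ℂ) + t * I + a).re = c + a ∧ ((c:ℂ) + t * I + a).im = t := by
    intro t; constructor <;> simp
  have hne : ∀ t : ℝ, (c:ℂ) + t * I ≠ 0 := by
    intro t h
    have : ((c:ℂ) + t * I).re = 0 := by rw [h]; simp
    rw [hre t] at this; linarith
  have hfun : (fun t : ℝ => mellin (hf a) ((c:ℂ) + t * I))
      = fun t : ℝ => ((Real.Gamma a : ℝ) : ℂ)⁻¹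
        * (((2 * Real.pi : ℝ) : ℂ) ^ (-((c:ℂ) + t * I))
          * Complex.Gamma (((c:ℂ) + t * I) + a) / ((c:ℂ) + t * I)) := by
    funext t
    exact mellin_hf a ha (by rw [hre t]; exact hc)
  rw [VerticalIntegrable, hfun]
  refine Integrable.const_mul ?_ _
  -- measurability
  have hcont : Continuous (fun t : ℝ => ((2 * Real.pi : ℝ) : ℂ) ^ (-((c:ℂ) + t * I))
      * Complex.Gamma (((c:ℂ) + t * I) + a) / ((c:ℂ) + t * I)) := by
    have hbase : Continuous fun t : ℝ => (c:ℂ) + t * I := by fun_prop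
    have h1 : Continuous fun t : ℝ => ((2 * Real.pi : ℝ) : ℂ) ^ (-((c:ℂ) + t * I)) :=
      hbase.neg.const_cpow (Or.inl (by
        simp only [ne_eq, Complex.ofReal_eq_zero]
        positivity))
    have h2 : Continuous fun t : ℝ => Complex.Gamma (((c:ℂ) + t * I) + a) := by
      rw [continuous_iff_continuousAt]
      intro t
      have hd : DifferentiableAt ℂ Complex.Gamma (((c:ℂ) + t * I) + a) := by
        refine Complex.differentiableAt_Gamma _ fun m => ?_
        intro h
        have : (((c:ℂ) + t * I + a)).re = (-(m:ℂ)).re := by rw [h]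
        simp only [Complex.add_re, Complex.ofReal_re, Complex.neg_re, Complex.natCast_re] at this
        have hm : (0:ℝ) ≤ m := Nat.cast_nonneg m
        simp at this
        nlinarith [this]
      exact ContinuousAt.comp (x := t) hd.continuousAt ((hbase.add continuous_const).continuousAt)
    exact (h1.mul h2).div hbase hne
  -- domination
  set m : ℝ := min 1 ((c + a) ^ 2) with hm
  have hm0 : 0 < m := lt_min one_pos (by positivity)
  set C : ℝ := (2 * Real.pi) ^ (-c) * Real.Gamma (c + a + 2) / c * m⁻¹ with hC
  refine Integrable.mono' (g := fun t => C * (1 + t ^ 2)⁻¹)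
    (integrable_inv_one_add_sq.const_mul C) hcont.aestronglyMeasurable (ae_of_all _ fun t => ?_)
  have hw : (0:ℝ) < ((c:ℂ) + t * I + a).re := by rw [(hreim t).1]; linarith
  have hΓd := my_Gamma_decay hw
  have habs2 : ‖(c:ℂ) + t * I + a‖ ^ 2 = (c + a) ^ 2 + t ^ 2 := by
    rw [Complex.sq_norm, Complex.normSq_apply, (hreim t).1, (hreim t).2]; ring
  have habsc : c ≤ ‖(c:ℂ) + t * I‖ := by
    have := Complex.abs_re_le_norm ((c:ℂ) + t * I)
    rw [hre t, _root_.abs_of_pos hc] at this; exact this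
  have hg2 : ‖Complex.Gamma (((c:ℂ) + t * I) + a)‖ ≤ Real.Gamma (c + a + 2) / ((c + a) ^ 2 + t ^ 2) := by
    rw [le_div_iff₀ (by positivity)]
    calc ‖Complex.Gamma (((c:ℂ) + t * I) + a)‖ * ((c + a) ^ 2 + t ^ 2)
        = ‖Complex.Gamma (((c:ℂ) + t * I) + a)‖ * ‖(c:ℂ) + t * I + a‖ ^ 2 := by
          rw [habs2]
      _ ≤ Real.Gamma (((c:ℂ) + t * I + a).re + 2) := hΓd
      _ = Real.Gamma (c + a + 2) := by rw [(hreim t).1]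
  have hpow : ‖((2 * Real.pi : ℝ) : ℂ) ^ (-((c:ℂ) + t * I))‖ = (2 * Real.pi) ^ (-c) := by
    rw [Complex.norm_cpow_eq_rpow_re_of_pos (by positivity)]
    congr 1
    simp
  have hmain : ‖((2 * Real.pi : ℝ) : ℂ) ^ (-((c:ℂ) + t * I))
      * Complex.Gamma (((c:ℂ) + t * I) + a) / ((c:ℂ) + t * I)‖
      ≤ (2 * Real.pi) ^ (-c) * (Real.Gamma (c + a + 2) / ((c + a) ^ 2 + t ^ 2)) / c := by
    rw [norm_div, norm_mul, hpow]
    have h1 : 0 ≤ (2 * Real.pi) ^ (-c : ℝ) := by positivity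
    have hnum : (2 * Real.pi) ^ (-c:ℝ) * ‖Complex.Gamma (((c:ℂ) + t * I) + a)‖
        ≤ (2 * Real.pi) ^ (-c:ℝ) * (Real.Gamma (c + a + 2) / ((c + a) ^ 2 + t ^ 2)) :=
      mul_le_mul_of_nonneg_left hg2 h1
    refine div_le_div₀ (by positivity) hnum hc ?_
    exact habsc
  refine hmain.trans ?_
  have hΓ2 : 0 ≤ Real.Gamma (c + a + 2) := (Real.Gamma_pos_of_pos (by linarith)).le
  have hkey : ((c + a) ^ 2 + t ^ 2)⁻¹ ≤ m⁻¹ * (1 + t ^ 2)⁻¹ := by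
    rw [← mul_inv]
    refine inv_anti₀ (by positivity) ?_
    calc m * (1 + t ^ 2) = m + m * t ^ 2 := by ring
      _ ≤ (c + a) ^ 2 + 1 * t ^ 2 := by
          refine add_le_add (min_le_right _ _) (mul_le_mul_of_nonneg_right (min_le_left _ _) (sq_nonneg t))
      _ = (c + a) ^ 2 + t ^ 2 := by ring
  calc (2 * Real.pi) ^ (-c) * (Real.Gamma (c + a + 2) / ((c + a) ^ 2 + t ^ 2)) / c
      = ((2 * Real.pi) ^ (-c) * Real.Gamma (c + a + 2) / c) * ((c + a) ^ 2 + t ^ 2)⁻¹ := by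
        ring
    _ ≤ ((2 * Real.pi) ^ (-c) * Real.Gamma (c + a + 2) / c) * (m⁻¹ * (1 + t ^ 2)⁻¹) := by
        refine mul_le_mul_of_nonneg_left hkey (by positivity)
    _ = C * (1 + t ^ 2)⁻¹ := by rw [hC]; ring




theorem heckeWeight_eq (k : ℕ) (hk : 2 ≤ k) {c : ℝ} (hc : 0 < c) {ξ : ℝ} (hξ : 0 < ξ) :
    heckeWeight k c ξ = hf ((k : ℝ) / 2) ξ := by
  set a : ℝ := (k : ℝ) / 2 with hadef
  have ha : 1 ≤ a := by
    rw [hadef]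
    have : (2:ℝ) ≤ (k:ℝ) := by exact_mod_cast hk
    linarith
  have hka : ((k : ℂ) / 2) = ((a : ℝ) : ℂ) := by rw [hadef]; push_cast; ring
  have h1 : heckeWeight k c ξ = mellinInv c (mellin (hf a)) ξ := by
    rw [heckeWeight, mellinInv]
    have hsc : ((1 / (2 * Real.pi) : ℝ)) • (∫ y : ℝ, (ξ:ℂ) ^ (-((c:ℂ) + y * I))
          • mellin (hf a) ((c:ℂ) + y * I))
        = ((1 / (2 * Real.pi) : ℝ) : ℂ) * ∫ y : ℝ, (ξ:ℂ) ^ (-((c:ℂ) + y * I))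
          • mellin (hf a) ((c:ℂ) + y * I) := by
      rw [Complex.real_smul]
    rw [hsc]
    congr 1
    · push_cast; ring
    refine integral_congr_ae (ae_of_all _ fun t => ?_)
    have hres : (0:ℝ) < ((c:ℂ) + t * I).re := by simpa using hc
    show ((2 * Real.pi : ℂ) ^ (-((c:ℂ) + t * I)) * Complex.Gamma (((c:ℂ) + t * I) + (k:ℂ) / 2) /
        Complex.Gamma ((k : ℂ) / 2)) * (ξ : ℂ) ^ (-((c:ℂ) + t * I)) / ((c:ℂ) + t * I)
      = (ξ:ℂ) ^ (-((c:ℂ) + t * I)) • mellin (hf a) ((c:ℂ) + t * I)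
    rw [mellin_hf a ha hres, smul_eq_mul, hka, Complex.Gamma_ofReal]
    push_cast
    ring_nf
  rw [h1]
  refine mellinInv_mellin_eq c (hf a) hξ (hf_mellinConvergent a ha hc)
    (hf_verticalIntegrable a ha hc) ?_
  unfold hf
  exact Complex.continuous_ofReal.continuousAt.comp
    (continuousAt_const.mul (g_continuousAt a ha hξ))


/-- `|W_k(ξ)| ≤ (k/(πξ))^k` for all `ξ > 0`, and in particular
`|W_k(ξ)| ≤ (k/ξ) π^{-(k-1)}` for `ξ ≥ k`. -/
theorem heckeWeight_bound (k : ℕ) (hk : 2 ≤ k) (c : ℝ) (hc : 0 < c) :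
    (∀ ξ : ℝ, 0 < ξ → ‖heckeWeight k c ξ‖ ≤ ((k : ℝ) / (Real.pi * ξ)) ^ k) ∧
    (∀ ξ : ℝ, (k : ℝ) ≤ ξ → ‖heckeWeight k c ξ‖ ≤ (k : ℝ) / ξ * (Real.pi ^ (k - 1))⁻¹) := by
  have hk2 : (2:ℝ) ≤ (k:ℝ) := by exact_mod_cast hk
  set a : ℝ := (k : ℝ) / 2 with hadef
  have ha : 1 ≤ a := by rw [hadef]; linarith
  have ha0 : 0 < a := by linarith
  have hΓ : 0 < Real.Gamma a := Real.Gamma_pos_of_pos ha0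
  have hpart1 : ∀ ξ : ℝ, 0 < ξ → ‖heckeWeight k c ξ‖ ≤ ((k : ℝ) / (Real.pi * ξ)) ^ k := by
    intro ξ hξ
    rw [heckeWeight_eq k hk hc hξ]
    have hg0 : 0 ≤ ∫ u in Ioi (2 * Real.pi * ξ), hG a u := g_nonneg a (by positivity)
    have hnorm : ‖hf a ξ‖ = (Real.Gamma a)⁻¹ * ∫ u in Ioi (2 * Real.pi * ξ), hG a u := by
      rw [hf, Complex.norm_real, Real.norm_eq_abs, _root_.abs_of_nonneg (by positivity)]
    rw [hnorm]
    have htail : (∫ u in Ioi (2 * Real.pi * ξ), hG a u)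
        ≤ (2 * Real.pi * ξ) ^ (-(k:ℝ)) * Real.Gamma (a + k) :=
      tail_bound a ha0 (by positivity) (by positivity)
    have hratio : Real.Gamma (a + k) ≤ Real.Gamma a * (a + k) ^ k := my_Gamma_ratio a ha0 k
    have hak : a + (k:ℝ) ≤ 2 * k := by rw [hadef]; linarith
    have hpowle : (a + (k:ℝ)) ^ k ≤ (2 * (k:ℝ)) ^ k := pow_le_pow_left₀ (by positivity) hak k
    have hrpow : (2 * Real.pi * ξ) ^ (-(k:ℝ)) = ((2 * Real.pi * ξ) ^ k)⁻¹ := by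
      rw [Real.rpow_neg (by positivity), Real.rpow_natCast]
    calc (Real.Gamma a)⁻¹ * ∫ u in Ioi (2 * Real.pi * ξ), hG a u
        ≤ (Real.Gamma a)⁻¹ * ((2 * Real.pi * ξ) ^ (-(k:ℝ)) * Real.Gamma (a + k)) := by
          exact mul_le_mul_of_nonneg_left htail (by positivity)
      _ ≤ (Real.Gamma a)⁻¹ * ((2 * Real.pi * ξ) ^ (-(k:ℝ)) * (Real.Gamma a * (2 * (k:ℝ)) ^ k)) := by
          refine mul_le_mul_of_nonneg_left ?_ (by positivity)
          refine mul_le_mul_of_nonneg_left ?_ (by positivity)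
          exact hratio.trans (mul_le_mul_of_nonneg_left hpowle hΓ.le)
      _ = (2 * (k:ℝ)) ^ k * ((2 * Real.pi * ξ) ^ k)⁻¹ := by
          rw [hrpow]; field_simp
      _ = ((k : ℝ) / (Real.pi * ξ)) ^ k := by
          rw [← div_eq_mul_inv, ← div_pow]
          congr 1
          field_simp
  refine ⟨hpart1, fun ξ hξk => ?_⟩
  have hξ : (0:ℝ) < ξ := lt_of_lt_of_le (by linarith) hξk
  refine (hpart1 ξ hξ).trans ?_
  have hπ1 : (1:ℝ) ≤ Real.pi := by linarith [Real.pi_gt_three]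
  have heq : ((k : ℝ) / (Real.pi * ξ)) ^ k = ((k:ℝ)/ξ) ^ k * (Real.pi ^ k)⁻¹ := by
    rw [show (k : ℝ) / (Real.pi * ξ) = ((k:ℝ)/ξ) * Real.pi⁻¹ by
        rw [mul_comm Real.pi ξ, ← div_div, div_eq_mul_inv ((k:ℝ)/ξ)], mul_pow, inv_pow]
  rw [heq]
  have h1 : ((k:ℝ)/ξ) ^ k ≤ (k:ℝ)/ξ := by
    have := pow_le_pow_of_le_one (a := (k:ℝ)/ξ) (by positivity)
      ((div_le_one hξ).mpr hξk) (show 1 ≤ k by omega)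
    simpa using this
  have h2 : (Real.pi ^ k)⁻¹ ≤ (Real.pi ^ (k-1))⁻¹ := by
    refine inv_anti₀ (by positivity) (pow_le_pow_right₀ hπ1 (Nat.sub_le k 1))
  exact mul_le_mul h1 h2 (by positivity) (by positivity)
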